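/- Let K be a field, n > 1, and a ∈ K[s]^n a nonzero row vector with gcd(a) = 1. For 1 ≤ i < j ≤ n, let u_{ij} ∈ K[s]^n be the vector with −a_j in position i, a_i in position j, and 0 in all other positions. Then syz(a) is generated as a K[s]-module by the set {u_{ij} : 1 ≤ i < j ≤ n}. -/

import Mathlib

open Polynomial
open scoped Classical

noncomputable section

/-- The degree of a polynomial vector: the maximum of the degrees of the entries. -/
def vdeg {K : Type*} [Field K] {n : ℕ} (h : Fin n → K[X]) : ℕ :=
  Finset.univ.sup fun i => (h i).natDegree

/-- The leading vector of a polynomial vector: the vector of coefficients of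
`s ^ (vdeg h)` in the entries. -/
def LV {K : Type*} [Field K] {n : ℕ} (h : Fin n → K[X]) : Fin n → K :=
  fun i => (h i).coeff (vdeg h)

/-- The syzygy module of a row vector `a` of polynomials. -/
def syz {K : Type*} [Field K] {n : ℕ} (a : Fin n → K[X]) :
    Submodule K[X] (Fin n → K[X]) where
  carrier := {h | ∑ i, a i * h i = 0}
  add_mem' := by
    intro x y hx hy
    simp only [Set.mem_setOf_eq] at *
    simp only [Pi.add_apply, mul_add, Finset.sum_add_distrib, hx, hy, add_zero]
  zero_mem' := by simp
  smul_mem' := by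
    intro c x hx
    simp only [Set.mem_setOf_eq] at *
    have h1 : ∑ i, a i * (c • x) i = c * ∑ i, a i * x i := by
      rw [Finset.mul_sum]
      refine Finset.sum_congr rfl fun i _ => ?_
      simp only [Pi.smul_apply, smul_eq_mul]
      ring
    rw [h1, hx, mul_zero]

/-- The coefficient matrix `A ∈ K^{(2d+1) × n(d+1)}` associated with a polynomial row
vector `a` of degree at most `d`:  `A_{k+1, i+jn} = c_{k-j,i}` where `c_m` is the vector of
coefficients of `s^m` in `a` (with `c_m = 0` for `m < 0` or `m > d`). -/
def coefA {K : Type*} [Field K] {n : ℕ} (d : ℕ) (hn : 0 < n) (a : Fin n → K[X]) :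
    Matrix (Fin (2*d+1)) (Fin (n*(d+1))) K :=
  Matrix.of fun k ℓ =>
    if (ℓ : ℕ) / n ≤ (k : ℕ) then
      (a ⟨(ℓ : ℕ) % n, Nat.mod_lt _ hn⟩).coeff ((k : ℕ) - (ℓ : ℕ) / n)
    else 0

/-- The `♭` isomorphism `K^{n(d+1)} → K[s]^n`: split `v` into `d+1` consecutive blocks
`w_0, …, w_d ∈ K^n` and form `∑_j s^j w_j`. -/
def flatv {K : Type*} [Field K] {n : ℕ} (d : ℕ) (v : Fin (n*(d+1)) → K) : Fin n → K[X] :=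
  fun i => ∑ j : Fin (d+1), C (v ⟨(i:ℕ) + (j:ℕ)*n, by
    calc (i:ℕ) + (j:ℕ)*n < n + (j:ℕ)*n := Nat.add_lt_add_right i.isLt _
      _ = n * ((j:ℕ)+1) := by ring
      _ ≤ n * (d+1) := Nat.mul_le_mul le_rfl j.isLt⟩) * X ^ (j:ℕ)

/-- The `♭` isomorphism `K^m → K[s]` for scalars. -/
def flat1 {K : Type*} [Field K] {m : ℕ} (w : Fin m → K) : K[X] :=
  ∑ k : Fin m, C (w k) * X ^ (k:ℕ)

/-- A column index `j` of a matrix is pivotal if the `j`-th column is not a `K`-linear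
combination of the columns of smaller index. -/
def Pivotal {K : Type*} [Field K] {m N : ℕ} (A : Matrix (Fin m) (Fin N) K) (j : Fin N) : Prop :=
  (fun k => A k j) ∉ Submodule.span K ((fun r : Fin N => fun k => A k r) '' {r | r < j})

/-- A basic non-pivotal index: the minimal non-pivotal index in its residue class modulo `n`. -/
def BasicNP {K : Type*} [Field K] {m N : ℕ} (n : ℕ) (A : Matrix (Fin m) (Fin N) K)
    (r : Fin N) : Prop :=
  ¬ Pivotal A r ∧ ∀ r' : Fin N, ¬ Pivotal A r' → (r':ℕ) % n = (r:ℕ) % n → r ≤ r'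

/-- `B` encodes, for each non-pivotal index `i`, the row-echelon null vector
`b_i = e_i − v_i`: `(b_i)_i = 1`, `(b_i)_j = −α_j` for pivotal `j < i` where
`A_{*i} = Σ α_j A_{*j}`, and all other entries vanish.  Equivalently, `b_i ∈ ker A`,
`(b_i)_i = 1` and `(b_i)_j = 0` unless `j = i` or `j` is pivotal with `j < i`. -/
def IsEchelonNull {K : Type*} [Field K] {m N : ℕ} (A : Matrix (Fin m) (Fin N) K)
    (B : Fin N → Fin N → K) : Prop :=
  ∀ i : Fin N, ¬ Pivotal A i →
    A.mulVec (B i) = 0 ∧ B i i = 1 ∧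
    ∀ j : Fin N, j ≠ i → ¬ (Pivotal A j ∧ j < i) → B i j = 0

/-- Shift an index by `t`, modulo the size (used only when `j + t` is in range). -/
def shiftIdx {N : ℕ} (j : Fin N) (t : ℕ) : Fin N :=
  ⟨((j:ℕ) + t) % N, Nat.mod_lt _ j.pos⟩
set_option maxHeartbeats 400000 in
/-- obvious syzygies generate.  If `gcd a = 1` (i.e. every common
divisor of the entries of `a` is a unit), then `syz a` is generated over `K[s]` by the
vectors `u_{ij}` (for `i < j`) having `−a_j` in position `i`, `a_i` in position `j` and
`0` elsewhere. -/
theorem syz_generated_by_obvious_syzygies {K : Type*} [Field K] {n : ℕ} (hn : 1 < n)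
    (a : Fin n → K[X]) (ha : a ≠ 0)
    (hcop : ∀ c : K[X], (∀ i, c ∣ a i) → IsUnit c) :
    syz a = Submodule.span K[X]
      {v : Fin n → K[X] | ∃ i j : Fin n, i < j ∧
        v = fun t => if t = i then -(a j) else if t = j then a i else 0} := by
  classical
  -- Bezout coefficients
  obtain ⟨b, hb⟩ : ∃ b : Fin n → K[X], ∑ i, b i * a i = 1 := by
    have hI : Ideal.span (Set.range a) = ⊤ := by
      obtain ⟨g, hg⟩ := (IsPrincipalIdealRing.principal (Ideal.span (Set.range a)))
      have hdvd : ∀ i, g ∣ a i := by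
        intro i
        have : a i ∈ Ideal.span (Set.range a) := Ideal.subset_span ⟨i, rfl⟩
        rw [hg] at this
        exact (Ideal.mem_span_singleton).mp this
      rw [hg]
      exact Ideal.span_singleton_eq_top.mpr (hcop g hdvd)
    have h1 : (1 : K[X]) ∈ Ideal.span (Set.range a) := hI ▸ Submodule.mem_top
    obtain ⟨b, hb⟩ := (Submodule.mem_span_range_iff_exists_fun K[X]).mp h1
    exact ⟨b, by simpa [smul_eq_mul] using hb⟩
  apply le_antisymm
  · -- syz a ≤ span
    intro h hh
    have hh' : ∑ i, a i * h i = 0 := hh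
    have key : h = ∑ i : Fin n, ∑ j : Fin n, (b i * h j) •
        (fun t => (if t = i then -(a j) else 0) + (if t = j then a i else 0)) := by
      funext t
      have e1 : ∀ i : Fin n, (∑ j : Fin n, (b i * h j) •
          (fun t => (if t = i then -(a j) else 0) + (if t = j then a i else 0))) t
          = ∑ j : Fin n, ((if t = i then b i * h j * (-(a j)) else 0)
              + (if t = j then b i * h j * a i else 0)) := by
        intro i
        rw [Finset.sum_apply]
        refine Finset.sum_congr rfl fun j _ => ?_
        simp only [Pi.smul_apply, Pi.add_apply, smul_eq_mul, mul_add, mul_ite, mul_zero]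
      rw [Finset.sum_apply]
      symm
      calc ∑ i : Fin n, (∑ j : Fin n, (b i * h j) •
              (fun t => (if t = i then -(a j) else 0) + (if t = j then a i else 0))) t
          = ∑ i : Fin n, ∑ j : Fin n, ((if t = i then b i * h j * (-(a j)) else 0)
              + (if t = j then b i * h j * a i else 0)) :=
            Finset.sum_congr rfl fun i _ => e1 i
        _ = (∑ i : Fin n, ∑ j : Fin n, (if t = i then b i * h j * (-(a j)) else 0))
              + ∑ i : Fin n, ∑ j : Fin n, (if t = j then b i * h j * a i else 0) := by
            rw [← Finset.sum_add_distrib]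
            exact Finset.sum_congr rfl fun i _ => by rw [← Finset.sum_add_distrib]
        _ = (∑ j : Fin n, b t * h j * (-(a j))) + ∑ i : Fin n, b i * h t * a i := by
            congr 1
            · rw [Finset.sum_comm]
              refine Finset.sum_congr rfl fun j _ => ?_
              simp [Finset.sum_ite_eq]
            · refine Finset.sum_congr rfl fun i _ => ?_
              simp [Finset.sum_ite_eq]
        _ = (-(b t)) * (∑ j : Fin n, a j * h j) + (∑ i : Fin n, b i * a i) * h t := by
            rw [Finset.mul_sum, Finset.sum_mul]
            congr 1
            · exact Finset.sum_congr rfl fun j _ => by ring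
            · exact Finset.sum_congr rfl fun i _ => by ring
        _ = h t := by rw [hh', hb, mul_zero, zero_add, one_mul]
    rw [key]
    refine Submodule.sum_mem _ fun i _ => Submodule.sum_mem _ fun j _ =>
      Submodule.smul_mem _ _ ?_
    rcases lt_trichotomy i j with hij | rfl | hij
    · have hne : i ≠ j := hij.ne
      have : (fun t => (if t = i then -(a j) else 0) + (if t = j then a i else 0))
          = fun t => if t = i then -(a j) else if t = j then a i else 0 := by
        funext t
        by_cases h1 : t = i
        · subst h1; simp [hne]
        · by_cases h2 : t = j <;> simp [h1, h2, Ne.symm hne]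
      rw [this]
      exact Submodule.subset_span ⟨i, j, hij, rfl⟩
    · have : (fun t => (if t = i then -(a i) else 0) + (if t = i then a i else 0))
          = (0 : Fin n → K[X]) := by
        funext t; by_cases h1 : t = i <;> simp [h1]
      rw [this]
      exact Submodule.zero_mem _
    · have hne : j ≠ i := hij.ne
      have : (fun t => (if t = i then -(a j) else 0) + (if t = j then a i else 0))
          = (-1 : K[X]) • fun t => if t = j then -(a i) else if t = i then a j else 0 := by
        funext t
        by_cases h1 : t = j
        · subst h1; simp [hne]
        · by_cases h2 : t = i <;> simp [h1, h2, Ne.symm hne]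
      rw [this]
      exact Submodule.smul_mem _ _ (Submodule.subset_span ⟨j, i, hij, rfl⟩)
  · rw [Submodule.span_le]
    rintro v ⟨i, j, hij, rfl⟩
    have hne : i ≠ j := hij.ne
    show ∑ t, a t * _ = 0
    calc ∑ t : Fin n, a t * (if t = i then -(a j) else if t = j then a i else 0)
        = ∑ t : Fin n, ((if t = i then a i * (-(a j)) else 0)
            + (if t = j then a j * a i else 0)) := by
          refine Finset.sum_congr rfl fun t _ => ?_
          by_cases h1 : t = i
          · subst h1; simp [hne]
          · by_cases h2 : t = j
            · subst h2; simp [h1]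
            · simp [h1, h2]
      _ = a i * (-(a j)) + a j * a i := by
          rw [Finset.sum_add_distrib]
          simp [Finset.sum_ite_eq]
      _ = 0 := by ring
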